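/- Let P be an adaptive ε_k-noisy sample of a compact set K with respect to a feature size function f, and let Q be the output of Declutter(P,k). Then every q ∈ Q satisfies d(q, q̄) ≤ 7 ε_k f(q̄), where q̄ is a nearest point of q in K. -/

import Mathlib

open Metric

/-- Core loop of the Declutter algorithm: scan the (pre-sorted) list, keeping a point `p`
iff no previously kept point lies in the open ball `B(p, 2 f p)` (w.r.t. distance `d`). -/
noncomputable def declutterAux {X : Type*} (d : X → X → ℝ) (f : X → ℝ) :
    List X → List X → List X
  | Q, [] => Q
  | Q, p :: rest =>
    if ∀ q ∈ Q, 2 * f p ≤ d p q then declutterAux d f (Q ++ [p]) rest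
    else declutterAux d f Q rest

noncomputable def declutter {X : Type*} (d : X → X → ℝ) (f : X → ℝ) (L : List X) : List X :=
  declutterAux d f [] L

/-- `Q` is a possible output of the Declutter algorithm on `P`, with robust distance
function `f`: the points of `P` are processed in nondecreasing order of `f`
(ties broken arbitrarily). -/
def IsDeclutterOutput {X : Type*} (d : X → X → ℝ) (f : X → ℝ) (P : Finset X)
    (Q : List X) : Prop :=
  ∃ L : List X, L.Perm P.toList ∧ L.Pairwise (fun a b => f a ≤ f b) ∧ Q = declutter d f L

variable {X : Type*} [MetricSpace X]

/-- Sorted (nondecreasing) list of distances from `x` to the points of `P`. -/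
noncomputable def sortedDists (P : Finset X) (x : X) : List ℝ :=
  (P.val.map (dist x)).sort (· ≤ ·)

/-- The k-distance: root mean square of the distances to the k nearest neighbors in `P`. -/
noncomputable def kdist (P : Finset X) (k : ℕ) (x : X) : ℝ :=
  Real.sqrt ((1 / (k : ℝ)) * (((sortedDists P x).take k).map (fun r => r ^ 2)).sum)

/-- `P` is an ε_k-noisy sample of `K`:
(1) the k-distance is at most ε on `K`; (2) every point of the space is within
`kdist + ε` of `K`. -/
def NoisySample (P : Finset X) (k : ℕ) (K : Set X) (ε : ℝ) : Prop :=
  (∀ x ∈ K, kdist P k x ≤ ε) ∧ ∀ x : X, infDist x K ≤ kdist P k x + ε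

/-- `P` is an adaptive ε_k-noisy sample of `K` with respect to the feature size `f`. -/
def AdaptiveNoisySample (P : Finset X) (k : ℕ) (K : Set X) (f : X → ℝ) (ε : ℝ) : Prop :=
  (∀ x ∈ K, kdist P k x ≤ ε * f x) ∧
    ∀ y : X, ∀ ybar ∈ K, (∀ z ∈ K, dist y ybar ≤ dist y z) →
      infDist y K ≤ kdist P k y + ε * f ybar

/-! ### Auxiliary lemmas about the Declutter algorithm -/

section DeclutterLemmas

variable {Y : Type*}

lemma declutterAux_spec (d : Y → Y → ℝ) (f : Y → ℝ) :
    ∀ (L Q : List Y), ∃ R : List Y, declutterAux d f Q L = Q ++ R ∧ R.Sublist L := by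
  intro L
  induction L with
  | nil => exact fun Q => ⟨[], by simp [declutterAux], List.Sublist.refl _⟩
  | cons p rest ih =>
    intro Q
    simp only [declutterAux]
    split_ifs with hg
    · obtain ⟨R, hR, hs⟩ := ih (Q ++ [p])
      exact ⟨p :: R, by rw [hR]; simp, List.Sublist.cons₂ p hs⟩
    · obtain ⟨R, hR, hs⟩ := ih Q
      exact ⟨R, hR, List.Sublist.cons p hs⟩

lemma declutterAux_pairwise (d : Y → Y → ℝ) (f : Y → ℝ) (hd : ∀ a b, d a b = d b a) :
    ∀ (L Q : List Y), Q.Pairwise (fun a b => 2 * f b ≤ d a b) →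
      (declutterAux d f Q L).Pairwise (fun a b => 2 * f b ≤ d a b) := by
  intro L
  induction L with
  | nil => intro Q h; simpa [declutterAux] using h
  | cons p rest ih =>
    intro Q h
    simp only [declutterAux]
    split_ifs with hg
    · apply ih
      refine List.pairwise_append.2 ⟨h, List.pairwise_singleton _ _, ?_⟩
      intro a ha b hb
      simp only [List.mem_singleton] at hb
      subst hb
      rw [hd]
      exact hg a ha
    · exact ih Q h

lemma declutterAux_cover (d : Y → Y → ℝ) (f : Y → ℝ) (hf : ∀ x, 0 ≤ f x)
    (hd0 : ∀ x, d x x = 0) :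
    ∀ (L Q : List Y), ∀ x ∈ L, ∃ w ∈ declutterAux d f Q L, d x w ≤ 2 * f x := by
  intro L
  induction L with
  | nil => intro Q x hx; cases hx
  | cons p rest ih =>
    intro Q x hx
    simp only [declutterAux]
    split_ifs with hg
    · rcases List.mem_cons.1 hx with rfl | hx'
      · obtain ⟨R, hR, -⟩ := declutterAux_spec d f rest (Q ++ [x])
        refine ⟨x, ?_, by rw [hd0]; linarith [hf x]⟩
        rw [hR]; simp
      · exact ih (Q ++ [p]) x hx'
    · rcases List.mem_cons.1 hx with rfl | hx'
      · push_neg at hg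
        obtain ⟨w, hw, hlt⟩ := hg
        obtain ⟨R, hR, -⟩ := declutterAux_spec d f rest Q
        refine ⟨w, ?_, le_of_lt hlt⟩
        rw [hR]; exact List.mem_append_left R hw
      · exact ih Q x hx'

lemma declutter_sep (d : Y → Y → ℝ) (f : Y → ℝ) (hd : ∀ a b, d a b = d b a)
    (L : List Y) (hL : L.Pairwise (fun a b => f a ≤ f b)) :
    ∀ q ∈ declutter d f L, ∀ w ∈ declutter d f L, q ≠ w → 2 * f q ≤ d q w := by
  obtain ⟨R, hR, hsub⟩ := declutterAux_spec d f L []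
  have hout : declutter d f L = R := by rw [declutter, hR]; simp
  have hpair : (declutter d f L).Pairwise (fun a b => 2 * f b ≤ d a b) :=
    declutterAux_pairwise d f hd L [] (List.Pairwise.nil)
  have hsorted : (declutter d f L).Pairwise (fun a b => f a ≤ f b) := by
    rw [hout]; exact List.Pairwise.sublist hsub hL
  have hT : (declutter d f L).Pairwise
      (fun a b => (2 * f b ≤ d a b ∧ f a ≤ f b) ∨ (2 * f a ≤ d b a ∧ f b ≤ f a)) :=
    (hpair.and hsorted).imp Or.inl
  intro q hq w hw hne
  have hsymm : Symmetric (fun a b : Y =>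
      (2 * f b ≤ d a b ∧ f a ≤ f b) ∨ (2 * f a ≤ d b a ∧ f b ≤ f a)) := by
    intro a b hab
    exact hab.elim Or.inr Or.inl
  letI : Std.Symm (fun a b : Y =>
      (2 * f b ≤ d a b ∧ f a ≤ f b) ∨ (2 * f a ≤ d b a ∧ f b ≤ f a)) := ⟨fun a b h => hsymm h⟩
  have := hT.forall hq hw hne
  rcases this with ⟨h1, h2⟩ | ⟨h1, h2⟩
  · calc 2 * f q ≤ 2 * f w := by linarith
      _ ≤ d q w := h1
  · rw [hd]; exact h1

end DeclutterLemmas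

/-! ### Auxiliary lemmas about order statistics and `kdist` -/

lemma multiset_countP_mono {α : Type*} (s : Multiset α) (p q : α → Prop)
    [DecidablePred p] [DecidablePred q] (h : ∀ a ∈ s, p a → q a) :
    s.countP p ≤ s.countP q := by
  classical
  rw [Multiset.countP_eq_card_filter, Multiset.countP_eq_card_filter]
  apply Multiset.card_le_card
  apply Multiset.le_iff_count.2
  intro a
  by_cases hp : q a
  · calc Multiset.count a (s.filter p) ≤ Multiset.count a s :=
        Multiset.count_le_of_le a (Multiset.filter_le _ _)
      _ = Multiset.count a (s.filter q) := (Multiset.count_filter_of_pos hp).symm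
  · rw [Multiset.count_filter_of_neg hp, Nat.le_zero, Multiset.count_eq_zero]
    intro hm
    exact hp (h a (Multiset.mem_of_mem_filter hm) (Multiset.of_mem_filter hm))

lemma sorted_filter_length {l : List ℝ} (hl : l.Pairwise (· ≤ ·)) {i : ℕ} (hi : i < l.length) :
    i + 1 ≤ (l.filter (fun a => a ≤ l.get ⟨i, hi⟩)).length := by
  have hall : ∀ a ∈ l.take (i + 1), a ≤ l.get ⟨i, hi⟩ := by
    intro a ha
    obtain ⟨j, hj, rfl⟩ := List.mem_take_iff_getElem.1 ha
    have hj1 : j < i + 1 := lt_of_lt_of_le hj (min_le_left _ _)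
    have hjl : j < l.length := lt_of_lt_of_le hj (min_le_right _ _)
    exact hl.rel_get_of_le (show (⟨j, hjl⟩ : Fin l.length) ≤ ⟨i, hi⟩ from
      Fin.mk_le_mk.2 (by omega))
  have heq : (l.take (i + 1)).filter (fun a => a ≤ l.get ⟨i, hi⟩) = l.take (i + 1) :=
    List.filter_eq_self.2 (fun a ha => by simpa using hall a ha)
  calc i + 1 = (l.take (i + 1)).length := by rw [List.length_take]; omega
    _ = ((l.take (i + 1)).filter (fun a => a ≤ l.get ⟨i, hi⟩)).length := by rw [heq]
    _ ≤ (l.filter (fun a => a ≤ l.get ⟨i, hi⟩)).length :=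
        List.Sublist.length_le (List.Sublist.filter _ (List.take_sublist _ _))

lemma sorted_get_le_of_filter {l : List ℝ} (hl : l.Pairwise (· ≤ ·)) {i : ℕ}
    (hi : i < l.length) {y : ℝ}
    (h : i + 1 ≤ (l.filter (fun a => a ≤ y)).length) : l.get ⟨i, hi⟩ ≤ y := by
  by_contra hy
  push_neg at hy
  have hdrop : ∀ a ∈ l.drop i, ¬ (a ≤ y) := by
    intro a ha hay
    have hld : l.drop i = l.get ⟨i, hi⟩ :: l.drop (i + 1) := List.drop_eq_getElem_cons hi
    have hsd : (l.drop i).Pairwise (· ≤ ·) := List.Pairwise.sublist (List.drop_sublist _ _) hl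
    rw [hld] at hsd ha
    have hgi : l.get ⟨i, hi⟩ ≤ a := by
      rcases List.mem_cons.1 ha with rfl | ha'
      · exact le_refl _
      · exact (List.pairwise_cons.1 hsd).1 a ha'
    linarith
  have hlen : (l.filter (fun a => a ≤ y)).length ≤ i := by
    conv_lhs => rw [← List.take_append_drop i l]
    rw [List.filter_append, List.length_append]
    have h2 : (l.drop i).filter (fun a => a ≤ y) = [] :=
      List.filter_eq_nil_iff.2 (fun a ha => by simpa using hdrop a ha)
    rw [h2]
    simp only [List.length_nil, add_zero]
    exact le_trans (List.length_filter_le _ _) (by rw [List.length_take]; omega)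
  omega

lemma sort_get_mono {α : Type*} (m : Multiset α) (F G : α → ℝ) (c : ℝ)
    (h : ∀ p ∈ m, F p ≤ G p + c) {i : ℕ}
    (hiF : i < ((m.map F).sort (· ≤ ·)).length)
    (hiG : i < ((m.map G).sort (· ≤ ·)).length) :
    ((m.map F).sort (· ≤ ·)).get ⟨i, hiF⟩ ≤ ((m.map G).sort (· ≤ ·)).get ⟨i, hiG⟩ + c := by
  classical
  set u := (m.map F).sort (· ≤ ·) with hu
  set v := (m.map G).sort (· ≤ ·) with hv
  set y := v.get ⟨i, hiG⟩ with hy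
  apply sorted_get_le_of_filter (Multiset.pairwise_sort _ _) hiF
  have h1 : i + 1 ≤ (v.filter (fun a => a ≤ y)).length :=
    sorted_filter_length (Multiset.pairwise_sort _ _) hiG
  have hcv : (v.filter (fun a => a ≤ y)).length = (m.map G).countP (fun a => a ≤ y) := by
    rw [← List.countP_eq_length_filter, ← Multiset.coe_countP, hv, Multiset.sort_eq]
  have hcu : (u.filter (fun a => a ≤ y + c)).length = (m.map F).countP (fun a => a ≤ y + c) := by
    rw [← List.countP_eq_length_filter, ← Multiset.coe_countP, hu, Multiset.sort_eq]
  have hle : (m.map G).countP (fun a => a ≤ y) ≤ (m.map F).countP (fun a => a ≤ y + c) := by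
    rw [Multiset.countP_map, Multiset.countP_map, ← Multiset.countP_eq_card_filter,
      ← Multiset.countP_eq_card_filter]
    exact multiset_countP_mono m _ _ (fun p hp hGp => le_trans (h p hp) (by linarith))
  calc i + 1 ≤ (v.filter (fun a => a ≤ y)).length := h1
    _ = (m.map G).countP (fun a => a ≤ y) := hcv
    _ ≤ (m.map F).countP (fun a => a ≤ y + c) := hle
    _ = (u.filter (fun a => a ≤ y + c)).length := hcu.symm

lemma length_sortedDists (P : Finset X) (x : X) : (sortedDists P x).length = P.card := by
  unfold sortedDists
  rw [Multiset.length_sort, Multiset.card_map]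
  rfl

lemma sortedDists_getD_nonneg (P : Finset X) (x : X) (i : ℕ) :
    0 ≤ (sortedDists P x).getD i 0 := by
  by_cases h : i < (sortedDists P x).length
  · rw [List.getD_eq_getElem _ _ h]
    have hm : (sortedDists P x)[i] ∈ sortedDists P x := List.getElem_mem _
    unfold sortedDists at hm ⊢
    obtain ⟨p, -, hp⟩ := Multiset.mem_map.1 ((Multiset.mem_sort _).1 hm)
    rw [← hp]
    exact dist_nonneg
  · rw [List.getD_eq_default _ _ (le_of_not_gt h)]

lemma take_map_sum_eq (g : ℝ → ℝ) :
    ∀ (k : ℕ) (l : List ℝ), k ≤ l.length →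
      ((l.take k).map g).sum = ∑ i ∈ Finset.range k, g (l.getD i 0) := by
  intro k
  induction k with
  | zero => simp
  | succ k ih =>
    intro l hl
    cases l with
    | nil => simp at hl
    | cons a t =>
      rw [List.take_succ_cons, List.map_cons, List.sum_cons,
        Finset.sum_range_succ' (fun i => g ((a :: t).getD i 0)) k]
      simp only [List.getD_cons_succ, List.getD_cons_zero]
      rw [ih t (by simpa using hl)]
      ring

lemma kdist_eq_sum (P : Finset X) (k : ℕ) (hkP : k ≤ P.card) (x : X) :
    kdist P k x =
      Real.sqrt ((1 / (k : ℝ)) * ∑ i ∈ Finset.range k, ((sortedDists P x).getD i 0) ^ 2) := by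
  rw [kdist, take_map_sum_eq (fun r => r ^ 2) k _ (by rw [length_sortedDists]; exact hkP)]

lemma kdist_nonneg (P : Finset X) (k : ℕ) (x : X) : 0 ≤ kdist P k x := Real.sqrt_nonneg _

lemma kdist_lipschitz (P : Finset X) (k : ℕ) (hk : 1 ≤ k) (hkP : k ≤ P.card) (x y : X) :
    kdist P k x ≤ kdist P k y + dist x y := by
  have hk0 : (0 : ℝ) < k := by exact_mod_cast hk
  set c := dist x y with hc
  have hc0 : 0 ≤ c := dist_nonneg
  set uD : ℕ → ℝ := fun i => (sortedDists P x).getD i 0 with huD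
  set vD : ℕ → ℝ := fun i => (sortedDists P y).getD i 0 with hvD
  have hlu : (sortedDists P x).length = P.card := length_sortedDists P x
  have hlv : (sortedDists P y).length = P.card := length_sortedDists P y
  have hui : ∀ i < k, uD i ≤ vD i + c := by
    intro i hik
    have hiu : i < (sortedDists P x).length := by omega
    have hiv : i < (sortedDists P y).length := by omega
    rw [huD, hvD]
    simp only
    rw [List.getD_eq_getElem _ _ hiu, List.getD_eq_getElem _ _ hiv]
    exact sort_get_mono P.val (dist x) (dist y) c
      (fun p _ => by
        rw [hc]
        have := dist_triangle x y p
        have h2 := dist_comm x y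
        linarith) hiu hiv
  set B := ∑ i ∈ Finset.range k, (vD i) ^ 2 with hB
  set S := ∑ i ∈ Finset.range k, vD i with hS
  have hv0 : ∀ i, 0 ≤ vD i := fun i => sortedDists_getD_nonneg P y i
  have hu0 : ∀ i, 0 ≤ uD i := fun i => sortedDists_getD_nonneg P x i
  have hB0 : 0 ≤ B := Finset.sum_nonneg (fun i _ => sq_nonneg _)
  have hS0 : 0 ≤ S := Finset.sum_nonneg (fun i _ => hv0 i)
  have hA : ∑ i ∈ Finset.range k, (uD i) ^ 2 ≤ ∑ i ∈ Finset.range k, (vD i + c) ^ 2 := by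
    apply Finset.sum_le_sum
    intro i hi
    exact pow_le_pow_left₀ (hu0 i) (hui i (Finset.mem_range.1 hi)) 2
  have hexp : ∑ i ∈ Finset.range k, (vD i + c) ^ 2 = B + 2 * c * S + k * c ^ 2 := by
    have : ∀ i ∈ Finset.range k, (vD i + c) ^ 2 = (vD i) ^ 2 + (2 * c) * vD i + c ^ 2 := by
      intro i _; ring
    rw [Finset.sum_congr rfl this, Finset.sum_add_distrib, Finset.sum_add_distrib,
      Finset.sum_const, ← Finset.mul_sum, Finset.card_range, nsmul_eq_mul]
  have hCS : S ^ 2 ≤ (k : ℝ) * B := by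
    have := sq_sum_le_card_mul_sum_sq (s := Finset.range k) (f := vD)
    simpa [Finset.card_range] using this
  have hSle : S ≤ Real.sqrt k * Real.sqrt B := by
    rw [← Real.sqrt_mul (le_of_lt hk0)]
    exact (Real.le_sqrt hS0 (by positivity)).2 hCS
  have htot : ∑ i ∈ Finset.range k, (uD i) ^ 2 ≤ (Real.sqrt B + Real.sqrt k * c) ^ 2 := by
    have h1 : Real.sqrt B ^ 2 = B := Real.sq_sqrt hB0
    have h2 : Real.sqrt (k : ℝ) ^ 2 = (k : ℝ) := Real.sq_sqrt (le_of_lt hk0)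
    have hrhs : (Real.sqrt B + Real.sqrt k * c) ^ 2
        = B + 2 * c * (Real.sqrt k * Real.sqrt B) + k * c ^ 2 := by
      rw [add_sq, mul_pow, h1, h2]; ring
    rw [hrhs]
    have : 2 * c * S ≤ 2 * c * (Real.sqrt k * Real.sqrt B) := by
      apply mul_le_mul_of_nonneg_left hSle (by linarith)
    linarith [hA, hexp.le, hexp.ge]
  rw [kdist_eq_sum P k hkP x, kdist_eq_sum P k hkP y]
  have hsplit : Real.sqrt ((1 / (k : ℝ)) * ∑ i ∈ Finset.range k, (uD i) ^ 2)
      ≤ Real.sqrt ((1 / (k : ℝ)) * (Real.sqrt B + Real.sqrt k * c) ^ 2) := by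
    apply Real.sqrt_le_sqrt
    apply mul_le_mul_of_nonneg_left htot (by positivity)
  refine le_trans hsplit ?_
  have hpos : 0 ≤ Real.sqrt B + Real.sqrt k * c := by positivity
  rw [Real.sqrt_mul (by positivity), Real.sqrt_sq hpos, mul_add, ← Real.sqrt_mul (by positivity),
    ← mul_assoc, ← Real.sqrt_mul (by positivity)]
  have hkk : (1 / (k : ℝ)) * k = 1 := by field_simp
  rw [hkk, Real.sqrt_one, one_mul]

lemma exists_near_kdist (P : Finset X) (k : ℕ) (hk : 1 ≤ k) (hkP : k ≤ P.card) (x : X) :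
    ∃ p ∈ P, dist x p ≤ kdist P k x := by
  have hk0 : (0 : ℝ) < k := by exact_mod_cast hk
  have hlen : (sortedDists P x).length = P.card := length_sortedDists P x
  have h0 : 0 < (sortedDists P x).length := by omega
  set r0 := (sortedDists P x).get ⟨0, h0⟩ with hr0
  have hr0mem : r0 ∈ sortedDists P x := List.get_mem _ _
  unfold sortedDists at hr0mem
  obtain ⟨p, hpm, hpe⟩ := Multiset.mem_map.1 ((Multiset.mem_sort _).1 hr0mem)
  refine ⟨p, hpm, ?_⟩
  rw [hpe]
  have hr00 : 0 ≤ r0 := by rw [← hpe]; exact dist_nonneg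
  rw [kdist_eq_sum P k hkP x]
  apply (Real.le_sqrt hr00 ?_).2
  · have hterm : ∀ i ∈ Finset.range k, r0 ^ 2 ≤ ((sortedDists P x).getD i 0) ^ 2 := by
      intro i hi
      have hik : i < k := Finset.mem_range.1 hi
      have hil : i < (sortedDists P x).length := by omega
      rw [List.getD_eq_getElem _ _ hil]
      apply pow_le_pow_left₀ hr00
      exact (Multiset.pairwise_sort _ _).rel_get_of_le
        (show (⟨0, h0⟩ : Fin _) ≤ ⟨i, hil⟩ from Fin.mk_le_mk.2 (Nat.zero_le _))
    have hsum : (k : ℝ) * r0 ^ 2 ≤ ∑ i ∈ Finset.range k, ((sortedDists P x).getD i 0) ^ 2 := by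
      calc (k : ℝ) * r0 ^ 2 = ∑ _i ∈ Finset.range k, r0 ^ 2 := by
            rw [Finset.sum_const, Finset.card_range, nsmul_eq_mul]
        _ ≤ _ := Finset.sum_le_sum hterm
    calc r0 ^ 2 = (1 / (k : ℝ)) * ((k : ℝ) * r0 ^ 2) := by field_simp
      _ ≤ (1 / (k : ℝ)) * ∑ i ∈ Finset.range k, ((sortedDists P x).getD i 0) ^ 2 := by
          apply mul_le_mul_of_nonneg_left hsum (by positivity)
  · have : 0 ≤ ∑ i ∈ Finset.range k, ((sortedDists P x).getD i 0) ^ 2 :=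
      Finset.sum_nonneg (fun i _ => sq_nonneg _)
    positivity

/-- Adaptive case: every kept point `q` is within `7 ε f(q̄)` of its nearest point `q̄`
in `K`. -/
theorem declutter_no_outliers_adaptive (P : Finset X) (k : ℕ) (hk : 1 ≤ k)
    (hkP : k ≤ P.card) (K : Set X) (hK : IsCompact K) (hKne : K.Nonempty)
    (f : X → ℝ) (hfpos : ∀ x ∈ K, 0 < f x)
    (hflip : ∀ x ∈ K, ∀ y ∈ K, |f x - f y| ≤ dist x y)
    (ε : ℝ) (hsample : AdaptiveNoisySample P k K f ε)
    (Q : List X) (hQ : IsDeclutterOutput (fun a b => dist a b) (kdist P k) P Q) :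
    ∀ q ∈ Q, ∀ qbar ∈ K, (∀ z ∈ K, dist q qbar ≤ dist q z) →
      dist q qbar ≤ 7 * ε * f qbar := by
  obtain ⟨L, hperm, hsorted, hQdef⟩ := hQ
  intro q hq qbar hqbar hnear
  set c := ε * f qbar with hc
  have hkd_qbar : kdist P k qbar ≤ c := hsample.1 qbar hqbar
  have hc0 : 0 ≤ c := le_trans (kdist_nonneg P k qbar) hkd_qbar
  -- dist q qbar ≤ kdist q + c
  have hdinf : dist q qbar ≤ infDist q K := by
    by_contra h
    push_neg at h
    obtain ⟨z, hz, hlt⟩ := (infDist_lt_iff hKne).1 h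
    exact absurd (hnear z hz) (not_le.2 hlt)
  have hinf : dist q qbar ≤ kdist P k q + c :=
    le_trans hdinf (hsample.2 q qbar hqbar hnear)
  -- a sample point close to qbar
  obtain ⟨p, hpP, hpd⟩ := exists_near_kdist P k hk hkP qbar
  have hpd' : dist qbar p ≤ c := le_trans hpd hkd_qbar
  have hkdp : kdist P k p ≤ 2 * c := by
    have hlip := kdist_lipschitz P k hk hkP p qbar
    have : dist p qbar = dist qbar p := dist_comm p qbar
    linarith
  -- p gets covered by some kept point
  have hpL : p ∈ L := hperm.mem_iff.2 (Finset.mem_toList.2 hpP)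
  obtain ⟨w, hw, hwD⟩ := declutterAux_cover (fun a b => dist a b) (kdist P k)
    (fun z => kdist_nonneg P k z) (fun z => dist_self z) L [] p hpL
  have hwQ : w ∈ Q := by rw [hQdef]; exact hw
  have hwd : dist p w ≤ 4 * c := le_trans hwD (by linarith)
  by_cases hqw : q = w
  · subst hqw
    have htri : dist q qbar ≤ dist q p + dist p qbar := dist_triangle q p qbar
    have h1 : dist q p = dist p q := dist_comm q p
    have h2 : dist p qbar = dist qbar p := dist_comm p qbar
    have h3 : dist p q ≤ 4 * c := hwd
    linarith
  · have hq' : q ∈ declutter (fun a b => dist a b) (kdist P k) L := by rw [← hQdef]; exact hq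
    have hw' : w ∈ declutter (fun a b => dist a b) (kdist P k) L := by rw [← hQdef]; exact hwQ
    have hsep : 2 * kdist P k q ≤ dist q w :=
      declutter_sep (fun a b => dist a b) (kdist P k) (fun a b => dist_comm a b)
        L hsorted q hq' w hw' hqw
    have htri : dist q w ≤ dist q qbar + dist qbar p + dist p w := dist_triangle4 q qbar p w
    have hkq : kdist P k q ≤ 6 * c := by linarith
    linarith
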